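/- Let P₄ := {(x₁,x₂,X₁₁,X₁₂,X₂₂) : X₁₁ = x₁², X₁₂ = x₁x₂, X₂₂ = x₂², x₁ ≥ 0, x₂ ≥ 0}. Then the closure of the convex hull of P₄ equals the set of (x₁,x₂,X₁₁,X₁₂,X₂₂) with X₁₂ ≥ 0, x₁ ≥ 0, x₂ ≥ 0 such that the 3×3 matrix with rows (1, x₁, x₂), (x₁, X₁₁, X₁₂), (x₂, X₁₂, X₂₂) is positive semidefinite. -/

import Mathlib

open Matrix Filter Topology

private def MS : Set (ℝ × ℝ × ℝ × ℝ × ℝ) :=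
  {p : ℝ × ℝ × ℝ × ℝ × ℝ | p.2.2.1 = p.1 ^ 2 ∧ p.2.2.2.1 = p.1 * p.2.1 ∧
    p.2.2.2.2 = p.2.1 ^ 2 ∧ 0 ≤ p.1 ∧ 0 ≤ p.2.1}

private lemma mom_mem (x y : ℝ) (hx : 0 ≤ x) (hy : 0 ≤ y) :
    ((x, y, x^2, x*y, y^2) : ℝ × ℝ × ℝ × ℝ × ℝ) ∈ MS :=
  ⟨rfl, rfl, rfl, hx, hy⟩

private lemma herm3 (a b X Y Z : ℝ) :
    (!![1, a, b; a, X, Y; b, Y, Z] : Matrix (Fin 3) (Fin 3) ℝ).IsHermitian := by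
  ext i j; fin_cases i <;> fin_cases j <;> simp [Matrix.conjTranspose_apply]

-- Case 1 lemma: a rank-one base point plus recession directions
private lemma case1 (a b X Y Z r y1 r2 : ℝ) (ha : 0 ≤ a) (hb : 0 ≤ b)
    (hr : 0 ≤ r) (hy1 : 0 ≤ y1) (hr2 : 0 ≤ r2)
    (e1 : a^2 + r^2 = X) (e2 : a*b + r*y1 = Y) (e3 : b^2 + y1^2 + r2^2 = Z) :
    ((a,b,X,Y,Z) : ℝ × ℝ × ℝ × ℝ × ℝ) ∈ closure (convexHull ℝ MS) := by
  set δ : ℕ → ℝ := fun n => ((n:ℝ)+2)⁻¹ with hδdef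
  have hδpos : ∀ n, 0 < δ n := fun n => by positivity
  have hδle : ∀ n, δ n ≤ 1/2 := by
    intro n
    rw [hδdef]
    rw [show (1:ℝ)/2 = (2:ℝ)⁻¹ by norm_num]
    exact inv_anti₀ (by norm_num) (by push_cast; linarith [Nat.cast_nonneg (α := ℝ) n])
  set x : ℕ → ℝ × ℝ × ℝ × ℝ × ℝ := fun n =>
    ((1-2*(δ n)^2)*a + δ n*r,
     (1-2*(δ n)^2)*b + δ n*y1 + δ n*r2,
     (1-2*(δ n)^2)*a^2 + r^2,
     (1-2*(δ n)^2)*(a*b) + r*y1,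
     (1-2*(δ n)^2)*b^2 + y1^2 + r2^2) with hxdef
  have hmem : ∀ n, x n ∈ convexHull ℝ MS := by
    intro n
    have hδ0 : δ n ≠ 0 := (hδpos n).ne'
    have hw0 : (0:ℝ) ≤ 1 - 2*(δ n)^2 := by nlinarith [hδle n, hδpos n]
    have hx : x n = ∑ i : Fin 3,
        (![1-2*(δ n)^2, (δ n)^2, (δ n)^2] i) •
        (![((a, b, a^2, a*b, b^2) : ℝ × ℝ × ℝ × ℝ × ℝ),
           (r/δ n, y1/δ n, (r/δ n)^2, (r/δ n)*(y1/δ n), (y1/δ n)^2),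
           (0, r2/δ n, 0, 0*(r2/δ n), (r2/δ n)^2)] i) := by
      rw [hxdef]
      simp only [Fin.sum_univ_three, Matrix.cons_val_zero, Matrix.cons_val_one, Matrix.head_cons,
        Matrix.cons_val_two, Matrix.tail_cons, Prod.smul_mk, smul_eq_mul, Prod.mk_add_mk]
      refine Prod.ext ?_ (Prod.ext ?_ (Prod.ext ?_ (Prod.ext ?_ ?_))) <;>
        simp only <;> field_simp <;> ring
    rw [hx]
    refine (convex_convexHull ℝ MS).sum_mem (fun i _ => ?_) ?_ (fun i _ => ?_)
    · fin_cases i <;> simp <;> nlinarith [hδpos n, hδle n]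
    · simp [Fin.sum_univ_three]; ring
    · apply subset_convexHull
      fin_cases i
      · exact mom_mem a b ha hb
      · exact mom_mem _ _ (by positivity) (by positivity)
      · have h0 : (0:ℝ) = 0 * (r2/δ n) := by ring
        simpa [zero_pow, pow_two] using mom_mem 0 (r2/δ n) le_rfl (by positivity)
  have hδ0 : Tendsto δ atTop (𝓝 0) :=
    tendsto_inv_atTop_zero.comp (tendsto_atTop_add_const_right _ 2 tendsto_natCast_atTop_atTop)
  have hw : Tendsto (fun n => 1-2*(δ n)^2) atTop (𝓝 1) := by
    have := (tendsto_const_nhds (α := ℕ) (f := atTop) (x := (1:ℝ))).sub (((hδ0.pow 2)).const_mul 2)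
    simpa using this
  have htend : Tendsto x atTop (𝓝 (a,b,X,Y,Z)) := by
    rw [← e1, ← e2, ← e3, hxdef]
    refine Tendsto.prodMk_nhds ?_ (Tendsto.prodMk_nhds ?_ (Tendsto.prodMk_nhds ?_
      (Tendsto.prodMk_nhds ?_ ?_)))
    · have := (hw.mul_const a).add (hδ0.mul_const r)
      simpa using this
    · have := ((hw.mul_const b).add (hδ0.mul_const y1)).add (hδ0.mul_const r2)
      simpa using this
    · have := (hw.mul_const (a^2)).add (tendsto_const_nhds (x := r^2))
      simpa using this
    · have := (hw.mul_const (a*b)).add (tendsto_const_nhds (x := r*y1))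
      simpa using this
    · have := ((hw.mul_const (b^2)).add (tendsto_const_nhds (x := y1^2))).add
        (tendsto_const_nhds (x := r2^2))
      simpa using this
  exact mem_closure_of_tendsto htend (Eventually.of_forall hmem)

-- Case 2 lemma: exact convex combination of four moment points
private lemma case2 (a b X Y Z g P Q : ℝ) (ha : 0 < a) (hb : 0 < b)
    (hg0 : 0 ≤ g) (hg1 : g < 1) (hP : 0 < P) (hQ : 0 < Q)
    (e1 : g*(a*b) = Y) (e2 : g*a^2 + (1-g)*P = X) (e3 : g*b^2 + (1-g)*Q = Z)
    (e4 : a^2*b^2 ≤ (P - a^2)*(Q - b^2)) :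
    ((a,b,X,Y,Z) : ℝ × ℝ × ℝ × ℝ × ℝ) ∈ convexHull ℝ MS := by
  have hPa : a^2 ≤ P := by nlinarith [sq_nonneg a, sq_nonneg b, mul_pos ha hb]
  have hQb : b^2 ≤ Q := by nlinarith [sq_nonneg a, sq_nonneg b, mul_pos ha hb]
  have hfrac : a^2/P + b^2/Q ≤ 1 := by
    rw [div_add_div _ _ hP.ne' hQ.ne', div_le_one (by positivity)]
    nlinarith
  have hx : ((a,b,X,Y,Z) : ℝ × ℝ × ℝ × ℝ × ℝ) = ∑ i : Fin 4,
      (![g, (1-g)*(a^2/P), (1-g)*(b^2/Q), (1-g)*(1 - a^2/P - b^2/Q)] i) •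
      (![((a, b, a^2, a*b, b^2) : ℝ × ℝ × ℝ × ℝ × ℝ),
         (P/a, 0, (P/a)^2, (P/a)*0, 0^2),
         (0, Q/b, 0^2, 0*(Q/b), (Q/b)^2),
         ((0:ℝ), (0:ℝ), (0:ℝ)^2, 0*0, (0:ℝ)^2)] i) := by
    simp only [Fin.sum_univ_four, Matrix.cons_val_zero, Matrix.cons_val_one, Matrix.head_cons,
      Matrix.cons_val_two, Matrix.tail_cons, Matrix.cons_val_three, Prod.smul_mk, smul_eq_mul,
      Prod.mk_add_mk]
    refine Prod.ext ?_ (Prod.ext ?_ (Prod.ext ?_ (Prod.ext ?_ ?_))) <;> simp only <;>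
      field_simp <;> (first | ring1 | linear_combination (P*a^2) * e2 | linear_combination (Q*b^2) * e3 | linear_combination e1 | linear_combination -e1 | linear_combination (-(P*a^2)) * e2 | linear_combination (-(Q*b^2)) * e3 | linear_combination -(P*Q)*e2 | linear_combination -(P*Q)*e1 | linear_combination -(P*Q)*e3)
  rw [hx]
  refine (convex_convexHull ℝ MS).sum_mem (fun i _ => ?_) ?_ (fun i _ => ?_)
  · fin_cases i <;> simp <;> nlinarith [div_nonneg (sq_nonneg a) hP.le,
      div_nonneg (sq_nonneg b) hQ.le, hfrac]
  · simp [Fin.sum_univ_four]; ring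
  · apply subset_convexHull
    fin_cases i
    · exact mom_mem a b ha.le hb.le
    · simpa using mom_mem (P/a) 0 (by positivity) le_rfl
    · simpa using mom_mem 0 (Q/b) le_rfl (by positivity)
    · simpa using mom_mem 0 0 le_rfl le_rfl

set_option maxHeartbeats 1000000 in
theorem stmt_9 :
    closure (convexHull ℝ
        {p : ℝ × ℝ × ℝ × ℝ × ℝ | p.2.2.1 = p.1 ^ 2 ∧ p.2.2.2.1 = p.1 * p.2.1 ∧
          p.2.2.2.2 = p.2.1 ^ 2 ∧ 0 ≤ p.1 ∧ 0 ≤ p.2.1}) =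
      {p : ℝ × ℝ × ℝ × ℝ × ℝ | 0 ≤ p.2.2.2.1 ∧ 0 ≤ p.1 ∧ 0 ≤ p.2.1 ∧
        (!![1, p.1, p.2.1; p.1, p.2.2.1, p.2.2.2.1; p.2.1, p.2.2.2.1, p.2.2.2.2] :
          Matrix (Fin 3) (Fin 3) ℝ).PosSemidef} := by
  show closure (convexHull ℝ MS) = _
  apply Set.Subset.antisymm
  · apply closure_minimal
    · apply convexHull_min
      · rintro ⟨x, y, X, Y, Z⟩ ⟨hX, hYe, hZ, hx, hy⟩
        simp only [Set.mem_setOf_eq] at hX hYe hZ ⊢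
        subst hX; subst hYe; subst hZ
        refine ⟨mul_nonneg hx hy, hx, hy, Matrix.PosSemidef.of_dotProduct_mulVec_nonneg (herm3 _ _ _ _ _) fun v => ?_⟩
        simp only [star_trivial, dotProduct, Matrix.mulVec, Fin.sum_univ_three,
          Matrix.cons_val_zero, Matrix.cons_val_one, Matrix.head_cons, Matrix.cons_val_two,
          Matrix.tail_cons, Matrix.cons_val', Matrix.head_fin_const, Matrix.empty_val',
          Matrix.cons_val_fin_one, Matrix.of_apply, Matrix.cons_val']
        nlinarith [sq_nonneg (v 0 + v 1 * x + v 2 * y)]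
      · rintro ⟨a, b, X, Y, Z⟩ h1 ⟨a', b', X', Y', Z'⟩ h2 α β hα hβ hαβ
        simp only [Set.mem_setOf_eq] at h1 h2
        obtain ⟨hY1, ha1, hb1, hs1⟩ := h1
        obtain ⟨hY2, ha2, hb2, hs2⟩ := h2
        simp only [Set.mem_setOf_eq, Prod.smul_mk, Prod.mk_add_mk, smul_eq_mul]
        refine ⟨by nlinarith, by nlinarith, by nlinarith, Matrix.PosSemidef.of_dotProduct_mulVec_nonneg (herm3 _ _ _ _ _) fun v => ?_⟩
        have q1 := hs1.dotProduct_mulVec_nonneg v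
        have q2 := hs2.dotProduct_mulVec_nonneg v
        simp only [star_trivial, dotProduct, Matrix.mulVec, Fin.sum_univ_three,
          Matrix.cons_val_zero, Matrix.cons_val_one, Matrix.head_cons, Matrix.cons_val_two,
          Matrix.tail_cons, Matrix.cons_val', Matrix.head_fin_const, Matrix.empty_val',
          Matrix.cons_val_fin_one, Matrix.of_apply] at q1 q2 ⊢
        have hβ' : β = 1 - α := by linarith
        subst hβ'
        nlinarith [mul_nonneg hα q1, mul_nonneg hβ q2]
    · have hset : {p : ℝ × ℝ × ℝ × ℝ × ℝ | 0 ≤ p.2.2.2.1 ∧ 0 ≤ p.1 ∧ 0 ≤ p.2.1 ∧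
          (!![1, p.1, p.2.1; p.1, p.2.2.1, p.2.2.2.1; p.2.1, p.2.2.2.1, p.2.2.2.2] :
            Matrix (Fin 3) (Fin 3) ℝ).PosSemidef} =
          ({p : ℝ × ℝ × ℝ × ℝ × ℝ | 0 ≤ p.2.2.2.1} ∩ ({p | 0 ≤ p.1} ∩ ({p | 0 ≤ p.2.1} ∩
            ⋂ v : Fin 3 → ℝ, {p : ℝ × ℝ × ℝ × ℝ × ℝ | 0 ≤ star v ⬝ᵥ
              (!![1, p.1, p.2.1; p.1, p.2.2.1, p.2.2.2.1; p.2.1, p.2.2.2.1, p.2.2.2.2] :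
                Matrix (Fin 3) (Fin 3) ℝ).mulVec v}))) := by
        ext q
        simp only [Set.mem_setOf_eq, Set.mem_inter_iff, Set.mem_iInter]
        constructor
        · rintro ⟨h1, h2, h3, h4⟩
          exact ⟨h1, h2, h3, fun v => h4.dotProduct_mulVec_nonneg v⟩
        · rintro ⟨h1, h2, h3, h4⟩
          exact ⟨h1, h2, h3, Matrix.PosSemidef.of_dotProduct_mulVec_nonneg (herm3 _ _ _ _ _) fun v => h4 v⟩
      rw [hset]
      refine IsClosed.inter (isClosed_le continuous_const (by fun_prop))
        (IsClosed.inter (isClosed_le continuous_const (by fun_prop))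
        (IsClosed.inter (isClosed_le continuous_const (by fun_prop)) ?_))
      refine isClosed_iInter fun v => isClosed_le continuous_const ?_
      have hfun : (fun p : ℝ × ℝ × ℝ × ℝ × ℝ => star v ⬝ᵥ
          (!![1, p.1, p.2.1; p.1, p.2.2.1, p.2.2.2.1; p.2.1, p.2.2.2.1, p.2.2.2.2] :
            Matrix (Fin 3) (Fin 3) ℝ).mulVec v) =
          fun p : ℝ × ℝ × ℝ × ℝ × ℝ =>
            v 0 * (v 0 + p.1 * v 1 + p.2.1 * v 2) +
            v 1 * (p.1 * v 0 + p.2.2.1 * v 1 + p.2.2.2.1 * v 2) +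
            v 2 * (p.2.1 * v 0 + p.2.2.2.1 * v 1 + p.2.2.2.2 * v 2) := by
        funext q
        simp [dotProduct, Matrix.mulVec, Fin.sum_univ_three]
      rw [hfun]
      fun_prop
  · rintro ⟨a, b, X, Y, Z⟩ ⟨hY, ha, hb, hM⟩
    replace hY : 0 ≤ Y := hY
    replace ha : 0 ≤ a := ha
    replace hb : 0 ≤ b := hb
    replace hM : (!![1, a, b; a, X, Y; b, Y, Z] : Matrix (Fin 3) (Fin 3) ℝ).PosSemidef := hM
    have q1 := hM.dotProduct_mulVec_nonneg ![-a, 1, 0]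
    have q2 := hM.dotProduct_mulVec_nonneg ![-b, 0, 1]
    simp [dotProduct, Matrix.mulVec, Fin.sum_univ_three] at q1 q2
    have hs : 0 ≤ X - a^2 := by nlinarith
    have hu : 0 ≤ Z - b^2 := by nlinarith
    have hst : X - a^2 = 0 → Y - a*b = 0 := by
      intro h0
      by_contra ht
      set k : ℝ := -(Z - b^2 + 1)/(2*(Y - a*b)) with hkdef
      have hq := hM.dotProduct_mulVec_nonneg ![-(a*k) - b, k, 1]
      simp [dotProduct, Matrix.mulVec, Fin.sum_univ_three] at hq
      have hq' : 0 ≤ (X - a^2)*k^2 + 2*(Y - a*b)*k + (Z - b^2) := by nlinarith [hq]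
      have hk : 2*(Y - a*b)*k = -(Z - b^2 + 1) := by
        rw [hkdef]
        field_simp
      rw [h0] at hq'
      nlinarith [hq', hk]
    have hkey : (Y - a*b)^2 ≤ (X - a^2)*(Z - b^2) := by
      rcases eq_or_lt_of_le hs with h0 | h0
      · rw [hst h0.symm]
        nlinarith [hu, h0]
      · have q3 := hM.dotProduct_mulVec_nonneg ![-(a*(Y - a*b) - b*(X - a^2)), Y - a*b, -(X - a^2)]
        simp [dotProduct, Matrix.mulVec, Fin.sum_univ_three] at q3
        nlinarith [q3, h0]
    by_cases hty : 0 ≤ Y - a*b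
    · set r := Real.sqrt (X - a^2) with hrdef
      set y1 := (Y - a*b)/r with hy1def
      have hrsq : r^2 = X - a^2 := Real.sq_sqrt hs
      have hry : r * y1 = Y - a*b := by
        by_cases hs0 : X - a^2 = 0
        · have := hst hs0
          rw [hy1def, this]
          simp
        · have hrpos : 0 < r := Real.sqrt_pos.mpr (lt_of_le_of_ne hs (Ne.symm hs0))
          rw [hy1def]
          field_simp
      have hc2 : 0 ≤ Z - b^2 - y1^2 := by
        by_cases hs0 : X - a^2 = 0
        · have ht0 := hst hs0
          have : y1 = 0 := by rw [hy1def, ht0]; simp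
          rw [this]
          simpa using hu
        · have hrpos : 0 < r := Real.sqrt_pos.mpr (lt_of_le_of_ne hs (Ne.symm hs0))
          have hy1sq : y1^2 * (X - a^2) = (Y - a*b)^2 := by
            rw [hy1def, div_pow, ← hrsq]
            field_simp
          have hXa : 0 < X - a^2 := lt_of_le_of_ne hs (Ne.symm hs0)
          nlinarith [hkey, hy1sq, hXa]
      apply case1 a b X Y Z r y1 (Real.sqrt (Z - b^2 - y1^2)) ha hb (Real.sqrt_nonneg _)
        (div_nonneg hty (Real.sqrt_nonneg _)) (Real.sqrt_nonneg _)
      · rw [hrsq]; ring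
      · rw [hry]; ring
      · rw [Real.sq_sqrt hc2]; ring
    · push_neg at hty
      have hty' : Y < a*b := by linarith
      have hab : 0 < a*b := lt_of_le_of_lt hY hty'
      have ha' : 0 < a := by nlinarith
      have hb' : 0 < b := by nlinarith
      have hg1 : Y/(a*b) < 1 := (div_lt_one hab).mpr hty'
      have h1g : 0 < 1 - Y/(a*b) := by linarith
      have hnumP : 0 < X - (Y/(a*b))*a^2 := by
        have h2 : 0 < a^2*(1 - Y/(a*b)) := by positivity
        linarith [hs, h2]
      have hnumQ : 0 < Z - (Y/(a*b))*b^2 := by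
        have h2 : 0 < b^2*(1 - Y/(a*b)) := by positivity
        linarith [hu, h2]
      apply subset_closure
      apply case2 a b X Y Z (Y/(a*b)) ((X - (Y/(a*b))*a^2)/(1 - Y/(a*b)))
        ((Z - (Y/(a*b))*b^2)/(1 - Y/(a*b))) ha' hb' (div_nonneg hY hab.le) hg1
        (div_pos hnumP h1g) (div_pos hnumQ h1g)
      · field_simp
      · rw [mul_comm (1 - Y/(a*b)) ((X - (Y/(a*b))*a^2)/(1 - Y/(a*b))),
          div_mul_cancel₀ _ h1g.ne']
        ring
      · rw [mul_comm (1 - Y/(a*b)) ((Z - (Y/(a*b))*b^2)/(1 - Y/(a*b))),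
          div_mul_cancel₀ _ h1g.ne']
        ring
      · have hPa : (X - (Y/(a*b))*a^2)/(1 - Y/(a*b)) - a^2 = (X - a^2)/(1 - Y/(a*b)) := by
          rw [eq_div_iff h1g.ne', sub_mul, div_mul_cancel₀ _ h1g.ne']
          ring
        have hQb : (Z - (Y/(a*b))*b^2)/(1 - Y/(a*b)) - b^2 = (Z - b^2)/(1 - Y/(a*b)) := by
          rw [eq_div_iff h1g.ne', sub_mul, div_mul_cancel₀ _ h1g.ne']
          ring
        rw [hPa, hQb, div_mul_div_comm, le_div_iff₀ (by positivity)]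
        have habg : a*b*(1 - Y/(a*b)) = a*b - Y := by field_simp
        have h5 : a^2*b^2*((1 - Y/(a*b))*(1 - Y/(a*b))) = (a*b - Y)^2 := by
          rw [← habg]; ring
        rw [h5]
        nlinarith [hkey]
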